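/- For every even positive integer D, there exists a finite 2-degenerate simple graph G with maximum degree at most D such that G² contains a clique with (5/2)·D vertices (i.e., a clique S with 2·|S| = 5·D). -/

import Mathlib

open scoped Classical

/-- The square of a simple graph. -/
def square {V : Type*} (G : SimpleGraph V) : SimpleGraph V where
  Adj u v := u ≠ v ∧ (G.Adj u v ∨ ∃ w, G.Adj u w ∧ G.Adj w v)
  symm := by
    constructor
    rintro u v ⟨h1, h2⟩
    refine ⟨h1.symm, ?_⟩
    rcases h2 with h | ⟨w, hw1, hw2⟩
    · exact Or.inl h.symm
    · exact Or.inr ⟨w, hw2.symm, hw1.symm⟩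
  loopless := by constructor; rintro v ⟨h, -⟩; exact h rfl

/-- A graph is `k`-degenerate: every nonempty (induced) subgraph has a vertex of
degree at most `k`. -/
def Degenerate {V : Type*} (k : ℕ) (G : SimpleGraph V) : Prop :=
  ∀ A : Finset V, A.Nonempty → ∃ v ∈ A, (A.filter (fun w => G.Adj v w)).card ≤ k

namespace LBC

abbrev Z5 := ZMod 5

/-- Vertex type: 5 hubs, `5m` "diagonal" vertices, `5m²` private connectors. -/
abbrev V (m : ℕ) := Z5 ⊕ ((Z5 × Fin m) ⊕ (Z5 × Fin m × Fin m))

/-- Hubs form a 5-cycle; vertex `r (i, a)` is joined to hubs `i` and `i + 2`;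
connector `c (i, a, b)` is joined to `r (i, a)` and `r (i + 1, b)`. -/
def adj (m : ℕ) : V m → V m → Prop
  | .inl i, .inl j => j = i + 1 ∨ i = j + 1
  | .inl j, .inr (.inl (i, _)) => j = i ∨ j = i + 2
  | .inr (.inl (i, _)), .inl j => j = i ∨ j = i + 2
  | .inr (.inl (i, a)), .inr (.inr (j, b, c)) => (j = i ∧ b = a) ∨ (i = j + 1 ∧ c = a)
  | .inr (.inr (j, b, c)), .inr (.inl (i, a)) => (j = i ∧ b = a) ∨ (i = j + 1 ∧ c = a)
  | _, _ => False

def G' (m : ℕ) : SimpleGraph (V m) where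
  Adj := adj m
  symm := by
    constructor
    rintro (i | (⟨i,a⟩ | ⟨i,a,b⟩)) (j | (⟨j,c⟩ | ⟨j,c,d⟩)) h <;>
      simp only [adj] at h ⊢ <;> tauto
  loopless := by
    constructor
    rintro (i | (⟨i,a⟩ | ⟨i,a,b⟩)) h <;> simp only [adj] at h
    · have : ∀ i : Z5, ¬ (i = i + 1 ∨ i = i + 1) := by decide
      exact this i h

/-- A 2-degeneracy rank function. -/
def rk (m : ℕ) : V m → ℕ
  | .inl i => i.val
  | .inr (.inl (i, a)) => 5 + (i.val * m + a.val)
  | .inr (.inr _) => 5 + 5 * m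

lemma rk_hub_lt (m : ℕ) (i : Z5) : rk m (Sum.inl i) < 5 := by
  simpa [rk] using ZMod.val_lt i

lemma rk_r_lt (m : ℕ) (i : Z5) (a : Fin m) :
    rk m (Sum.inr (Sum.inl (i, a))) < 5 + 5 * m := by
  have h1 : i.val * m ≤ 4 * m :=
    Nat.mul_le_mul_right m (by have := ZMod.val_lt i; omega)
  have h2 : a.val < m := a.isLt
  simp only [rk]
  omega

lemma adj_rk_ne (m : ℕ) (u v : V m) (h : adj m u v) : rk m u ≠ rk m v := by
  obtain (i | (⟨i,a⟩ | ⟨i,a,b⟩)) := u <;> obtain (j | (⟨j,c⟩ | ⟨j,c,d⟩)) := v <;>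
    simp only [adj] at h
  · have : ∀ i j : Z5, (j = i + 1 ∨ i = j + 1) → ¬ i.val = j.val := by decide
    simpa [rk] using this i j h
  · have := rk_hub_lt m i
    have h2 : 5 ≤ rk m (Sum.inr (Sum.inl (j, c)) : V m) := by simp [rk]
    omega
  · have := rk_hub_lt m j
    have h2 : 5 ≤ rk m (Sum.inr (Sum.inl (i, a)) : V m) := by simp [rk]
    omega
  · have := rk_r_lt m i a
    have h2 : rk m (Sum.inr (Sum.inr (j, c, d)) : V m) = 5 + 5 * m := rfl
    omega
  · have := rk_r_lt m j c
    have h2 : rk m (Sum.inr (Sum.inr (i, a, b)) : V m) = 5 + 5 * m := rfl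
    omega

/-- Possible lower-rank neighbours. -/
def predF (m : ℕ) : V m → Finset (V m)
  | .inl i => {.inl (i+1), .inl (i-1)}
  | .inr (.inl (i, _)) => {.inl i, .inl (i+2)}
  | .inr (.inr (i, b, c)) => {.inr (.inl (i, b)), .inr (.inl (i+1, c))}

lemma predF_card (m : ℕ) (v : V m) : (predF m v).card ≤ 2 := by
  obtain (i | (⟨i,a⟩ | ⟨i,a,b⟩)) := v <;>
    simp only [predF] <;>
    exact (Finset.card_insert_le _ _).trans (by simp)

lemma mem_predF (m : ℕ) (v w : V m) (hadj : adj m v w) (hlt : rk m w < rk m v) :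
    w ∈ predF m v := by
  obtain (i | (⟨i,a⟩ | ⟨i,a,b⟩)) := v <;> obtain (j | (⟨j,c⟩ | ⟨j,c,d⟩)) := w <;>
    simp only [adj] at hadj
  · rcases hadj with h | h
    · subst h; simp [predF]
    · have : j = i - 1 := by rw [h]; ring
      subst this; simp [predF]
  · exfalso
    have := rk_hub_lt m i
    have h2 : 5 ≤ rk m (Sum.inr (Sum.inl (j, c)) : V m) := by simp [rk]
    omega
  · rcases hadj with h | h <;> subst h <;> simp [predF]
  · exfalso
    have := rk_r_lt m i a
    have h2 : rk m (Sum.inr (Sum.inr (j, c, d)) : V m) = 5 + 5 * m := rfl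
    omega
  · rcases hadj with ⟨h1, h2⟩ | ⟨h1, h2⟩
    · subst h1; subst h2; simp [predF]
    · subst h1; subst h2; simp [predF]

lemma degen (m : ℕ) : Degenerate 2 (G' m) := by
  intro A hA
  obtain ⟨v, hv, hmax⟩ := A.exists_max_image (rk m) hA
  refine ⟨v, hv, ?_⟩
  have hsub : A.filter (fun w => (G' m).Adj v w) ⊆ predF m v := by
    intro w hw
    simp only [Finset.mem_filter] at hw
    have hadj : adj m v w := hw.2
    have hle := hmax w hw.1
    have hne := adj_rk_ne m v w hadj
    exact mem_predF m v w hadj (by omega)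
  exact (Finset.card_le_card hsub).trans (predF_card m v)

lemma deg_le (m : ℕ) (v : V m) :
    (Finset.univ.filter (fun w => adj m v w)).card ≤ 2 * m + 2 := by
  obtain (i | (⟨i,a⟩ | ⟨i,a,b⟩)) := v
  · have hsub : Finset.univ.filter (fun w => adj m (Sum.inl i) w) ⊆
        (({Sum.inl (i+1), Sum.inl (i-1)} : Finset (V m)) ∪
          Finset.univ.image (fun a : Fin m => (Sum.inr (Sum.inl (i, a)) : V m))) ∪
        Finset.univ.image (fun a : Fin m => (Sum.inr (Sum.inl (i - 2, a)) : V m)) := by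
      intro w hw
      simp only [Finset.mem_filter] at hw
      obtain (j | (⟨j,c⟩ | ⟨j,c,d⟩)) := w <;> simp only [adj] at hw
      · rcases hw.2 with h | h
        · subst h; simp
        · have : j = i - 1 := by rw [h]; ring
          subst this; simp
      · rcases hw.2 with h | h
        · subst h; simp
        · have : j = i - 2 := by rw [h]; ring
          subst this; simp
      · exact absurd hw.2 (by simp)
    refine (Finset.card_le_card hsub).trans ?_
    refine (Finset.card_union_le _ _).trans ?_
    have h1 := Finset.card_union_le ({Sum.inl (i+1), Sum.inl (i-1)} : Finset (V m))
      (Finset.univ.image (fun a : Fin m => (Sum.inr (Sum.inl (i, a)) : V m)))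
    have h2 : (({Sum.inl (i+1), Sum.inl (i-1)} : Finset (V m))).card ≤ 2 :=
      (Finset.card_insert_le _ _).trans (by simp)
    have h3 : (Finset.univ.image (fun a : Fin m => (Sum.inr (Sum.inl (i, a)) : V m))).card ≤ m :=
      Finset.card_image_le.trans (by simp)
    have h4 : (Finset.univ.image (fun a : Fin m => (Sum.inr (Sum.inl (i-2, a)) : V m))).card ≤ m :=
      Finset.card_image_le.trans (by simp)
    omega
  · have hsub : Finset.univ.filter (fun w => adj m (Sum.inr (Sum.inl (i, a))) w) ⊆
        (({Sum.inl i, Sum.inl (i+2)} : Finset (V m)) ∪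
          Finset.univ.image (fun b : Fin m => (Sum.inr (Sum.inr (i, a, b)) : V m))) ∪
        Finset.univ.image (fun b : Fin m => (Sum.inr (Sum.inr (i - 1, b, a)) : V m)) := by
      intro w hw
      simp only [Finset.mem_filter] at hw
      obtain (j | (⟨j,c⟩ | ⟨j,c,d⟩)) := w <;> simp only [adj] at hw
      · rcases hw.2 with h | h <;> subst h <;> simp
      · exact absurd hw.2 (by simp)
      · rcases hw.2 with ⟨h1, h2⟩ | ⟨h1, h2⟩
        · subst h1; subst h2; simp
        · have hj : j = i - 1 := by rw [h1]; ring
          subst hj; subst h2; simp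
    refine (Finset.card_le_card hsub).trans ?_
    refine (Finset.card_union_le _ _).trans ?_
    have h1 := Finset.card_union_le ({Sum.inl i, Sum.inl (i+2)} : Finset (V m))
      (Finset.univ.image (fun b : Fin m => (Sum.inr (Sum.inr (i, a, b)) : V m)))
    have h2 : (({Sum.inl i, Sum.inl (i+2)} : Finset (V m))).card ≤ 2 :=
      (Finset.card_insert_le _ _).trans (by simp)
    have h3 : (Finset.univ.image (fun b : Fin m => (Sum.inr (Sum.inr (i, a, b)) : V m))).card ≤ m :=
      Finset.card_image_le.trans (by simp)
    have h4 : (Finset.univ.image (fun b : Fin m => (Sum.inr (Sum.inr (i-1, b, a)) : V m))).card ≤ m :=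
      Finset.card_image_le.trans (by simp)
    omega
  · have hsub : Finset.univ.filter (fun w => adj m (Sum.inr (Sum.inr (i, a, b))) w) ⊆
        ({Sum.inr (Sum.inl (i, a)), Sum.inr (Sum.inl (i+1, b))} : Finset (V m)) := by
      intro w hw
      simp only [Finset.mem_filter] at hw
      obtain (j | (⟨j,c⟩ | ⟨j,c,d⟩)) := w <;> simp only [adj] at hw
      · exact absurd hw.2 (by simp)
      · rcases hw.2 with ⟨h1, h2⟩ | ⟨h1, h2⟩
        · subst h1; subst h2; simp
        · subst h1; subst h2; simp
      · exact absurd hw.2 (by simp)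
    refine (Finset.card_le_card hsub).trans ?_
    have : (({Sum.inr (Sum.inl (i, a)), Sum.inr (Sum.inl (i+1, b))} : Finset (V m))).card ≤ 2 :=
      (Finset.card_insert_le _ _).trans (by simp)
    omega

/-- The clique in the square: hubs together with all diagonal vertices. -/
def S' (m : ℕ) : Finset (V m) :=
  (Finset.univ.image (fun i : Z5 => (Sum.inl i : V m))) ∪
  (Finset.univ.image (fun p : Z5 × Fin m => (Sum.inr (Sum.inl p) : V m)))

lemma card_S' (m : ℕ) : (S' m).card = 5 + 5 * m := by
  rw [S', Finset.card_union_of_disjoint]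
  · rw [Finset.card_image_of_injective _ (fun x y h => Sum.inl_injective h),
      Finset.card_image_of_injective _
        (fun x y h => Sum.inl_injective (Sum.inr_injective h))]
    simp [ZMod.card]
  · rw [Finset.disjoint_left]
    rintro x hx hy
    simp only [Finset.mem_image] at hx hy
    obtain ⟨i, -, rfl⟩ := hx
    obtain ⟨p, -, h⟩ := hy
    exact absurd h (by simp)

lemma z1 : ∀ i j : Z5, i ≠ j →
    (j = i + 1 ∨ i = j + 1) ∨
    ∃ w : Z5, (w = i + 1 ∨ i = w + 1) ∧ (j = w + 1 ∨ w = j + 1) := by decide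

lemma z2 : ∀ j i : Z5, (j = i ∨ j = i + 2) ∨
    ∃ w : Z5, (w = j + 1 ∨ j = w + 1) ∧ (w = i ∨ w = i + 2) := by decide

lemma z3 : ∀ i j : Z5, (∃ w : Z5, (w = i ∨ w = i + 2) ∧ (w = j ∨ w = j + 2)) ∨
    j = i + 1 ∨ i = j + 1 := by decide

lemma hub_r_sq (m : ℕ) (j i : Z5) (a : Fin m) :
    (G' m).Adj (Sum.inl j) (Sum.inr (Sum.inl (i, a))) ∨
    ∃ w, (G' m).Adj (Sum.inl j) w ∧ (G' m).Adj w (Sum.inr (Sum.inl (i, a))) := by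
  rcases z2 j i with h | ⟨w, hw1, hw2⟩
  · exact Or.inl h
  · exact Or.inr ⟨Sum.inl w, hw1, hw2⟩

lemma clique' (m : ℕ) : ∀ u ∈ S' m, ∀ v ∈ S' m, u ≠ v → (square (G' m)).Adj u v := by
  have memS : ∀ u ∈ S' m, (∃ i : Z5, u = Sum.inl i) ∨
      ∃ (i : Z5) (a : Fin m), u = Sum.inr (Sum.inl (i, a)) := by
    intro u hu
    simp only [S', Finset.mem_union, Finset.mem_image] at hu
    rcases hu with ⟨i, -, rfl⟩ | ⟨⟨i, a⟩, -, rfl⟩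
    · exact Or.inl ⟨i, rfl⟩
    · exact Or.inr ⟨i, a, rfl⟩
  intro u hu v hv hne
  refine ⟨hne, ?_⟩
  rcases memS u hu with ⟨i, rfl⟩ | ⟨i, a, rfl⟩ <;>
    rcases memS v hv with ⟨j, rfl⟩ | ⟨j, b, rfl⟩
  · have hij : i ≠ j := fun h => hne (by rw [h])
    rcases z1 i j hij with h | ⟨w, hw1, hw2⟩
    · exact Or.inl h
    · exact Or.inr ⟨Sum.inl w, hw1, hw2⟩
  · exact hub_r_sq m i j b
  · rcases hub_r_sq m j i a with h | ⟨w, hw1, hw2⟩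
    · exact Or.inl ((G' m).adj_symm h)
    · exact Or.inr ⟨w, (G' m).adj_symm hw2, (G' m).adj_symm hw1⟩
  · rcases z3 i j with ⟨w, hw1, hw2⟩ | h | h
    · exact Or.inr ⟨Sum.inl w, hw1, hw2⟩
    · exact Or.inr ⟨Sum.inr (Sum.inr (i, a, b)), Or.inl ⟨rfl, rfl⟩, Or.inr ⟨h, rfl⟩⟩
    · exact Or.inr ⟨Sum.inr (Sum.inr (j, b, a)), Or.inr ⟨h, rfl⟩, Or.inl ⟨rfl, rfl⟩⟩

lemma filter_map_card {α β : Type*} (e : α ≃ β) (s : Finset α) (p : β → Prop) :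
    ((s.map e.toEmbedding).filter p).card = (s.filter (fun a => p (e a))).card := by
  rw [Finset.filter_map, Finset.card_map]
  congr 1

end LBC

/-- For every even positive integer `D`, there exists a finite 2-degenerate simple
graph `G` with maximum degree at most `D` such that `G²` contains a clique `S` with
`2·|S| = 5·D`. -/
theorem lower_bound_construction (D : ℕ) (hD : 0 < D) (heven : Even D) :
    ∃ (n : ℕ) (G : SimpleGraph (Fin n)) (S : Finset (Fin n)),
      Degenerate 2 G ∧
      (∀ v : Fin n, (Finset.univ.filter (fun w => G.Adj v w)).card ≤ D) ∧
      (square G).IsClique (S : Set (Fin n)) ∧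
      2 * S.card = 5 * D := by
  obtain ⟨k, hk⟩ := heven
  set m : ℕ := k - 1 with hm
  have hD2 : D = 2 * m + 2 := by omega
  set n : ℕ := Fintype.card (LBC.V m) with hn
  set e : LBC.V m ≃ Fin n := Fintype.equivFin (LBC.V m) with he
  set G : SimpleGraph (Fin n) := SimpleGraph.comap (e.symm : Fin n → LBC.V m) (LBC.G' m)
    with hG
  refine ⟨n, G, (LBC.S' m).map e.toEmbedding, ?_, ?_, ?_, ?_⟩
  · -- 2-degenerate
    intro A hA
    obtain ⟨v', hv', hcard⟩ := LBC.degen m (A.map e.symm.toEmbedding)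
      (by simpa using hA)
    refine ⟨e v', ?_, ?_⟩
    · obtain ⟨x, hx, hxe⟩ := Finset.mem_map.1 hv'
      have hxv : e v' = x := by rw [← hxe]; simp
      rwa [hxv]
    · have key := LBC.filter_map_card e.symm A (fun w => (LBC.G' m).Adj v' w)
      have h2 : A.filter (fun w => G.Adj (e v') w)
          = A.filter (fun w => (LBC.G' m).Adj v' (e.symm w)) := by
        apply Finset.filter_congr
        intro w _
        simp [hG, SimpleGraph.comap]
      rw [key] at hcard
      convert hcard using 2
      convert h2
  · -- max degree
    intro v
    have key := LBC.filter_map_card e.symm Finset.univ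
      (fun w => (LBC.G' m).Adj (e.symm v) w)
    have h2 : Finset.univ.filter (fun w => G.Adj v w)
        = Finset.univ.filter (fun w => (LBC.G' m).Adj (e.symm v) (e.symm w)) := by
      apply Finset.filter_congr
      intro w _
      simp [hG, SimpleGraph.comap]
    rw [Finset.map_univ_equiv] at key
    convert (show (Finset.univ.filter (fun w => (LBC.G' m).Adj (e.symm v) (e.symm w))).card ≤ D from ?_) using 2
    · convert h2
    rw [← key]
    calc (Finset.univ.filter (fun w => (LBC.G' m).Adj (e.symm v) w)).card
        ≤ 2 * m + 2 := LBC.deg_le m (e.symm v)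
      _ ≤ D := by omega
  · -- clique in the square
    intro x hx y hy hne
    simp only [Finset.coe_map, Set.mem_image, Finset.mem_coe] at hx hy
    obtain ⟨u, hu, rfl⟩ := hx
    obtain ⟨v, hv, rfl⟩ := hy
    have hune : u ≠ v := fun h => hne (by rw [h])
    obtain ⟨-, h2⟩ := LBC.clique' m u hu v hv hune
    refine ⟨hne, ?_⟩
    rcases h2 with h | ⟨w, hw1, hw2⟩
    · left
      show (LBC.G' m).Adj (e.symm (e.toEmbedding u)) (e.symm (e.toEmbedding v))
      simpa using h
    · right
      refine ⟨e w, ?_, ?_⟩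
      · show (LBC.G' m).Adj (e.symm (e.toEmbedding u)) (e.symm (e w))
        simpa using hw1
      · show (LBC.G' m).Adj (e.symm (e w)) (e.symm (e.toEmbedding v))
        simpa using hw2
  · -- cardinality
    rw [Finset.card_map, LBC.card_S', hD2]
    ring
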